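/- A hyperbolic homogeneous polynomial in ℝ[x,y] of degree n ≥ 2 has at least one real linear factor. -/

import Mathlib

open MvPolynomial

noncomputable def Hess (f : MvPolynomial (Fin 2) ℝ) : MvPolynomial (Fin 2) ℝ :=
  pderiv 0 (pderiv 0 f) * pderiv 1 (pderiv 1 f) - (pderiv 0 (pderiv 1 f)) ^ 2

-- degree sum over univ for homogeneous support
lemma hom_sum_eq {f : MvPolynomial (Fin 2) ℝ} {n : ℕ} (hf : f.IsHomogeneous n)
    {d : Fin 2 →₀ ℕ} (hd : coeff d f ≠ 0) : d 0 + d 1 = n := by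
  have h := hf hd
  rw [show (Finsupp.weight 1 : (Fin 2 →₀ ℕ) →+ ℕ) = Finsupp.weight (fun _ => 1) from rfl,
    ← Finsupp.degree_eq_weight_one] at h
  have : d.degree = ∑ i : Fin 2, d i := by
    rw [Finsupp.degree]
    exact Finset.sum_subset (Finset.subset_univ _) (by
      intro x _ hx
      simpa using (Finsupp.notMem_support_iff.mp hx))
  rw [this, Fin.sum_univ_two] at h
  exact h

-- scaling lemma
lemma hom_aeval_mul {A : Type*} [CommRing A] [Algebra ℝ A]
    {f : MvPolynomial (Fin 2) ℝ} {n : ℕ} (hf : f.IsHomogeneous n)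
    (s : Fin 2 → A) (w : A) :
    aeval (fun i => s i * w) f = aeval s f * w ^ n := by
  rw [aeval_def, aeval_def, eval₂_eq', eval₂_eq', Finset.sum_mul]
  refine Finset.sum_congr rfl fun d hd => ?_
  have hdc : coeff d f ≠ 0 := mem_support_iff.mp hd
  have hsum := hom_sum_eq hf hdc
  rw [mul_assoc]
  congr 1
  rw [Fin.prod_univ_two, Fin.prod_univ_two, mul_pow, mul_pow]
  calc s 0 ^ d 0 * w ^ d 0 * (s 1 ^ d 1 * w ^ d 1)
      = s 0 ^ d 0 * s 1 ^ d 1 * (w ^ (d 0 + d 1)) := by rw [pow_add]; ring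
    _ = s 0 ^ d 0 * s 1 ^ d 1 * w ^ n := by rw [hsum]

lemma aeval_C_vec {A : Type*} [CommRing A] [Algebra ℝ A]
    (f : MvPolynomial (Fin 2) ℝ) (v : Fin 2 → ℝ) :
    aeval (fun i => (algebraMap ℝ A (v i))) f = algebraMap ℝ A (eval v f) := by
  rw [aeval_def, eval_eq', eval₂_eq', map_sum]
  refine Finset.sum_congr rfl fun d hd => ?_
  rw [map_mul, map_prod]
  congr 1
  exact Finset.prod_congr rfl fun i _ => by rw [map_pow]

lemma aeval_eq_eval (f : MvPolynomial (Fin 2) ℝ) (v : Fin 2 → ℝ) :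
    aeval v f = eval v f := by
  simp [aeval_def, eval₂_eq', eval_eq', Algebra.algebraMap_self_apply]

-- Euler's identity
lemma euler {f : MvPolynomial (Fin 2) ℝ} {n : ℕ} (hf : f.IsHomogeneous n) :
    X 0 * pderiv 0 f + X 1 * pderiv 1 f = (n : MvPolynomial (Fin 2) ℝ) * f := by
  have key : ∀ d : Fin 2 →₀ ℕ, ∀ c : ℝ, (d 0 + d 1 = n) →
      X 0 * pderiv 0 (monomial d c) + X 1 * pderiv 1 (monomial d c)
        = (n : MvPolynomial (Fin 2) ℝ) * monomial d c := by
    intro d c hc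
    have single_term : ∀ i : Fin 2, X i * pderiv i (monomial d c) = monomial d (c * d i) := by
      intro i
      rw [pderiv_monomial]
      rcases Nat.eq_zero_or_pos (d i) with h0 | hpos
      · rw [h0]; simp
      · have hle : Finsupp.single i 1 ≤ d := by
          rw [Finsupp.single_le_iff]; exact hpos
        have hsum2 : Finsupp.single i 1 + (d - Finsupp.single i 1) = d := by
          rw [add_comm]; exact tsub_add_cancel_of_le hle
        rw [X, monomial_mul, one_mul, hsum2]
    rw [single_term 0, single_term 1, ← map_add]
    have : (n : MvPolynomial (Fin 2) ℝ) = C (n : ℝ) := by simp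
    rw [this, C_mul_monomial]
    congr 1
    push_cast [← hc]
    ring
  conv_lhs => rw [← support_sum_monomial_coeff f]
  conv_rhs => rw [← support_sum_monomial_coeff f]
  rw [map_sum (pderiv 0), map_sum (pderiv 1), Finset.mul_sum, Finset.mul_sum, Finset.mul_sum,
    ← Finset.sum_add_distrib]
  exact Finset.sum_congr rfl fun d hd => key d _ (hom_sum_eq hf (mem_support_iff.mp hd))

lemma pderiv_comm01 (f : MvPolynomial (Fin 2) ℝ) :
    pderiv 0 (pderiv 1 f) = pderiv 1 (pderiv 0 f) := by
  induction f using MvPolynomial.induction_on' with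
  | monomial d c =>
    rw [pderiv_monomial, pderiv_monomial, pderiv_monomial, pderiv_monomial]
    have h01 : ((d - Finsupp.single 1 1 : Fin 2 →₀ ℕ)) (0 : Fin 2) = d 0 := by
      rw [Finsupp.tsub_apply, Finsupp.single_apply]
      simp
    have h10 : ((d - Finsupp.single 0 1 : Fin 2 →₀ ℕ)) (1 : Fin 2) = d 1 := by
      rw [Finsupp.tsub_apply, Finsupp.single_apply]
      simp
    have hidx : d - Finsupp.single 1 1 - Finsupp.single 0 1
        = d - Finsupp.single 0 1 - Finsupp.single 1 1 := by
      ext j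
      rw [Finsupp.tsub_apply, Finsupp.tsub_apply, Finsupp.tsub_apply, Finsupp.tsub_apply]
      omega
    rw [h01, h10, hidx]
    congr 1
    ring
  | add p q hp hq => rw [map_add, map_add, map_add, map_add, hp, hq]

noncomputable def Phi : MvPolynomial (Fin 2) ℝ →ₐ[ℝ] Polynomial ℝ :=
  aeval ![Polynomial.X, 1]

lemma Phi_eval (g : MvPolynomial (Fin 2) ℝ) (t : ℝ) :
    (Phi g).eval t = eval ![t, 1] g := by
  induction g using MvPolynomial.induction_on with
  | C a => simp [Phi]
  | add p q hp hq => simp [map_add, hp, hq]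
  | mul_X p i hp =>
    rw [map_mul, Polynomial.eval_mul, hp, map_mul]
    congr 1
    fin_cases i <;> simp [Phi]

lemma Phi_derivative (g : MvPolynomial (Fin 2) ℝ) :
    Polynomial.derivative (Phi g) = Phi (pderiv 0 g) := by
  induction g using MvPolynomial.induction_on with
  | C a => simp [Phi]
  | add p q hp hq => simp [map_add, hp, hq]
  | mul_X p i hp =>
    rw [map_mul, Polynomial.derivative_mul, hp, pderiv_mul, map_add, map_mul, map_mul]
    fin_cases i <;>
      simp [Phi, pderiv_X_self, pderiv_X_of_ne (show (1:Fin 2) ≠ 0 by decide)]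

lemma Phi_coeff_hom {f : MvPolynomial (Fin 2) ℝ} {n : ℕ} (hf : f.IsHomogeneous n) :
    (Phi f).coeff n = eval ![1, 0] f := by
  rw [Phi, aeval_def, eval₂_eq', eval_eq', Polynomial.finset_sum_coeff]
  refine Finset.sum_congr rfl fun d hd => ?_
  have hsum := hom_sum_eq hf (mem_support_iff.mp hd)
  rw [Fin.prod_univ_two, Fin.prod_univ_two]
  simp only [Matrix.cons_val_zero, Matrix.cons_val_one, Matrix.head_cons]
  rw [show (algebraMap ℝ (Polynomial ℝ)) (coeff d f) = Polynomial.C (coeff d f) from rfl,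
    one_pow, mul_one, Polynomial.coeff_C_mul, Polynomial.coeff_X_pow]
  rw [one_pow, one_mul, zero_pow_eq]
  have : (n = d 0) ↔ (d 1 = 0) := by omega
  by_cases h : d 1 = 0
  · rw [if_pos h, if_pos (this.mpr h)]
  · rw [if_neg h, if_neg (fun hh => h (this.mp hh))]

lemma min_derivs (p : Polynomial ℝ) (t0 : ℝ) (hmin : ∀ t, p.eval t0 ≤ p.eval t) :
    p.derivative.eval t0 = 0 ∧ 0 ≤ (p.derivative.derivative).eval t0 := by
  have hloc : IsLocalMin (fun t => p.eval t) t0 := Filter.Eventually.of_forall hmin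
  have hd1 : p.derivative.eval t0 = 0 := by
    rw [← Polynomial.deriv]; exact hloc.deriv_eq_zero
  refine ⟨hd1, ?_⟩
  set u : Polynomial ℝ := p.comp (Polynomial.X + Polynomial.C t0) with hu
  have hueval : ∀ h : ℝ, u.eval h = p.eval (h + t0) := by
    intro h; rw [hu, Polynomial.eval_comp]; simp
  have hud : Polynomial.derivative u = (Polynomial.derivative p).comp
      (Polynomial.X + Polynomial.C t0) := by
    rw [hu, Polynomial.derivative_comp]; simp
  have hudd : Polynomial.derivative (Polynomial.derivative u)
      = (Polynomial.derivative (Polynomial.derivative p)).comp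
        (Polynomial.X + Polynomial.C t0) := by
    rw [hud, Polynomial.derivative_comp]; simp
  have hc1 : u.coeff 1 = 0 := by
    have h0 := Polynomial.coeff_derivative u 0
    rw [Polynomial.coeff_zero_eq_eval_zero, hud, Polynomial.eval_comp] at h0
    simp at h0
    rw [hd1] at h0
    norm_num at h0
    linarith [h0]
  have hpdd : (Polynomial.derivative (Polynomial.derivative p)).eval t0 = 2 * u.coeff 2 := by
    have h0 := Polynomial.coeff_derivative (Polynomial.derivative u) 0
    have h1 := Polynomial.coeff_derivative u 1
    rw [Polynomial.coeff_zero_eq_eval_zero, hudd, Polynomial.eval_comp] at h0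
    norm_num at h0 h1
    rw [h0, h1]
    ring
  -- now the nonnegativity of u.coeff 2
  set v : Polynomial ℝ := u - Polynomial.C (u.coeff 0) with hv
  have hdvd : Polynomial.X ^ 2 ∣ v := by
    rw [Polynomial.X_pow_dvd_iff]
    intro d hd
    interval_cases d
    · simp [hv]
    · simp [hv, hc1]
  obtain ⟨s, hs⟩ := hdvd
  have hveval : ∀ h : ℝ, v.eval h = p.eval (h + t0) - p.eval t0 := by
    intro h
    rw [hv, Polynomial.eval_sub, Polynomial.eval_C, hueval,
      Polynomial.coeff_zero_eq_eval_zero, hueval, zero_add]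
  have hsnn : ∀ h : ℝ, h ≠ 0 → 0 ≤ s.eval h := by
    intro h hh
    have h1 : 0 ≤ v.eval h := by rw [hveval]; linarith [hmin (h + t0)]
    rw [hs] at h1
    simp only [Polynomial.eval_mul, Polynomial.eval_pow, Polynomial.eval_X] at h1
    have h2 : (0:ℝ) < h ^ 2 := by positivity
    nlinarith [h1, h2]
  have hs0 : 0 ≤ s.eval 0 := by
    have hc : Continuous fun h : ℝ => s.eval h := s.continuous
    have ht : Filter.Tendsto (fun h : ℝ => s.eval h) (nhdsWithin 0 {(0:ℝ)}ᶜ)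
        (nhds (s.eval 0)) :=
      (hc.tendsto 0).mono_left nhdsWithin_le_nhds
    refine ge_of_tendsto ht ?_
    filter_upwards [self_mem_nhdsWithin] with h hh
    exact hsnn h (Set.mem_compl_singleton_iff.mp hh)
  have hc2 : u.coeff 2 = s.eval 0 := by
    have : v.coeff 2 = u.coeff 2 := by
      rw [hv, Polynomial.coeff_sub, Polynomial.coeff_C]
      simp
    rw [← this, hs, ← Polynomial.coeff_zero_eq_eval_zero]
    have := Polynomial.coeff_X_pow_mul s 2 0
    simpa using this
  rw [hpdd, hc2]
  linarith

lemma core (f : MvPolynomial (Fin 2) ℝ) (n : ℕ) (hn : 2 ≤ n) (hfh : f.IsHomogeneous n)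
    (hhyp : ∀ x y : ℝ, (x, y) ≠ (0, 0) → eval ![x, y] (Hess f) < 0)
    (hpos : ∀ t : ℝ, 0 < eval ![t, 1] f)
    (hc : eval ![1, 0] f ≠ 0) : False := by
  set p := Phi f with hp
  have hpe : ∀ t, 0 < p.eval t := fun t => by rw [hp, Phi_eval]; exact hpos t
  have hdeg : 0 < p.degree := by
    have h1 : (n : WithBot ℕ) ≤ p.degree :=
      Polynomial.le_degree_of_ne_zero (by rw [hp, Phi_coeff_hom hfh]; exact hc)
    have h2 : (0 : WithBot ℕ) < (n : WithBot ℕ) := by exact_mod_cast (by omega : 0 < n)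
    exact lt_of_lt_of_le h2 h1
  -- p tends to +infinity at cocompact
  set q := p.comp (-Polynomial.X) with hq
  have hqdeg : 0 < q.degree := by
    rw [← Polynomial.natDegree_pos_iff_degree_pos] at hdeg ⊢
    rw [hq, Polynomial.natDegree_comp]
    simpa using hdeg
  have hqe : ∀ x : ℝ, q.eval x = p.eval (-x) := by
    intro x; rw [hq, Polynomial.eval_comp]; simp
  have habs : ∀ t : ℝ, |p.eval t| = p.eval t := fun t => abs_of_pos (hpe t)
  have h1 : Filter.Tendsto (fun t => p.eval t) Filter.atTop Filter.atTop := by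
    have := Polynomial.abs_tendsto_atTop p hdeg
    simpa only [habs] using this
  have h2 : Filter.Tendsto (fun t => p.eval t) Filter.atBot Filter.atTop := by
    have hq1 := Polynomial.abs_tendsto_atTop q hqdeg
    have := hq1.comp Filter.tendsto_neg_atBot_atTop
    have heq : ((fun x => |q.eval x|) ∘ fun x : ℝ => -x) = fun t => p.eval t := by
      funext t
      simp only [Function.comp_apply, hqe, neg_neg, habs]
    rwa [heq] at this
  have hcc : Filter.Tendsto (fun t => p.eval t) (Filter.cocompact ℝ) Filter.atTop := by
    rw [cocompact_eq_atBot_atTop]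
    exact Filter.Tendsto.sup h2 h1
  obtain ⟨t0, ht0⟩ := Continuous.exists_forall_le p.continuous hcc
  obtain ⟨hd1, hd2⟩ := min_derivs p t0 ht0
  -- translate to MvPolynomial data
  set v : Fin 2 → ℝ := ![t0, 1] with hv
  set P := eval v f with hP
  set Fx := eval v (pderiv 0 f) with hFx
  set Fy := eval v (pderiv 1 f) with hFy
  set A := eval v (pderiv 0 (pderiv 0 f)) with hA
  set B := eval v (pderiv 0 (pderiv 1 f)) with hB
  set D := eval v (pderiv 1 (pderiv 1 f)) with hD
  have hPpos : 0 < P := hpos t0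
  have hFx0 : Fx = 0 := by
    rw [hFx, ← Phi_eval, ← Phi_derivative, ← hp]; exact hd1
  have hAnn : 0 ≤ A := by
    rw [hA, ← Phi_eval, ← Phi_derivative, ← Phi_derivative, ← hp]; exact hd2
  -- Euler identities evaluated at v
  have E0 := euler hfh
  have e0 : t0 * Fx + 1 * Fy = (n : ℝ) * P := by
    have := congrArg (eval v) E0
    simpa [hv] using this
  have E1 := congrArg (pderiv 0) E0
  rw [map_add, pderiv_mul, pderiv_mul, pderiv_X_self,
    pderiv_X_of_ne (show (1 : Fin 2) ≠ 0 by decide),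
    show ((n : MvPolynomial (Fin 2) ℝ)) = C (n : ℝ) by simp, pderiv_C_mul] at E1
  have e1 : 1 * Fx + t0 * A + (0 * Fy + 1 * B) = (n : ℝ) * Fx := by
    have := congrArg (eval v) E1
    simpa [hv] using this
  have E2 := congrArg (pderiv 1) E0
  rw [map_add, pderiv_mul, pderiv_mul, pderiv_X_self,
    pderiv_X_of_ne (show (0 : Fin 2) ≠ 1 by decide),
    show ((n : MvPolynomial (Fin 2) ℝ)) = C (n : ℝ) by simp, pderiv_C_mul,
    ← pderiv_comm01] at E2
  have e2 : 0 * Fx + t0 * B + (1 * Fy + 1 * D) = (n : ℝ) * Fy := by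
    have := congrArg (eval v) E2
    simpa [hv] using this
  have hHess : A * D - B ^ 2 < 0 := by
    have := hhyp t0 1 (by simp)
    rw [Hess] at this
    simpa [hv, hA, hB, hD] using this
  have hn2 : (2 : ℝ) ≤ (n : ℝ) := by exact_mod_cast hn
  have key : A * D - B ^ 2 = ((n:ℝ)^2 - (n:ℝ)) * P * A := by
    linear_combination A * e2 - B * e1 + ((n:ℝ) - 1) * A * e0
      - ((n:ℝ) - 1) * (B + t0 * A) * hFx0
  have hfin : 0 ≤ ((n:ℝ)^2 - (n:ℝ)) * P * A := by
    apply mul_nonneg (mul_nonneg ?_ hPpos.le) hAnn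
    nlinarith [hn2]
  linarith [hHess, key, hfin]

lemma linear_factor_of_root_b (f : MvPolynomial (Fin 2) ℝ) (n : ℕ) (hn : 1 ≤ n)
    (hfh : f.IsHomogeneous n) (a b : ℝ) (hb : b ≠ 0) (hroot : eval ![a, b] f = 0) :
    (C b * X 0 - C a * X 1) ∣ f := by
  set e := finSuccEquiv ℝ 1 with he
  set c : MvPolynomial (Fin 1) ℝ := C (a * b⁻¹) * X 0 with hc
  -- evaluation of e f at c equals a substitution
  have hcomp : ∀ g : MvPolynomial (Fin 2) ℝ,
      Polynomial.eval c (e g) = aeval ![c, X 0] g := by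
    intro g
    induction g using MvPolynomial.induction_on with
    | C r => simp [he, finSuccEquiv_apply]
    | add p q hp hq => simp [map_add, hp, hq]
    | mul_X p i hp =>
      rw [map_mul, Polynomial.eval_mul, hp, map_mul]
      congr 1
      fin_cases i
      · rw [show ((⟨0, by norm_num⟩ : Fin 2)) = 0 from rfl, finSuccEquiv_X_zero]
        simp
      · rw [show ((⟨1, by norm_num⟩ : Fin 2)) = Fin.succ 0 from rfl, finSuccEquiv_X_succ]
        simp
  -- the root property
  have hev1 : eval ![a * b⁻¹, 1] f = 0 := by
    have h := hom_aeval_mul hfh ![a * b⁻¹, 1] b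
    have hvec : (fun i => (![a * b⁻¹, 1] : Fin 2 → ℝ) i * b) = ![a, b] := by
      funext i
      fin_cases i <;> simp [hb]
    rw [hvec, _root_.aeval_eq_eval, _root_.aeval_eq_eval, hroot] at h
    have hbn : b ^ n ≠ 0 := pow_ne_zero _ hb
    exact (mul_eq_zero.mp h.symm).resolve_right hbn
  have hroot' : Polynomial.eval c (e f) = 0 := by
    rw [hcomp]
    have hvec : (![c, X 0] : Fin 2 → MvPolynomial (Fin 1) ℝ)
        = fun i => (fun j => algebraMap ℝ (MvPolynomial (Fin 1) ℝ) ((![a * b⁻¹, 1] : Fin 2 → ℝ) j)) i * X 0 := by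
      funext i
      fin_cases i <;> simp [hc, algebraMap_eq]
    rw [hvec, hom_aeval_mul hfh, aeval_C_vec, hev1]
    simp
  have hdvd : (Polynomial.X - Polynomial.C c) ∣ e f :=
    Polynomial.dvd_iff_isRoot.mpr hroot'
  -- identify e of the linear polynomial
  have hel : e (C b * X 0 - C a * X 1)
      = Polynomial.C (C b) * (Polynomial.X - Polynomial.C c) := by
    rw [map_sub, map_mul, map_mul]
    rw [he]
    rw [show (X 1 : MvPolynomial (Fin 2) ℝ) = X (Fin.succ 0) from rfl]
    rw [finSuccEquiv_X_zero, finSuccEquiv_X_succ]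
    have hCb : finSuccEquiv ℝ 1 (C b) = Polynomial.C (C b) := by
      simp [finSuccEquiv_apply]
    have hCa : finSuccEquiv ℝ 1 (C a) = Polynomial.C (C a) := by
      simp [finSuccEquiv_apply]
    rw [hCb, hCa, mul_sub, ← Polynomial.C_mul, ← Polynomial.C_mul, hc]
    congr 2
    rw [← mul_assoc, ← C_mul]
    congr 2
    field_simp
  have hunit : IsUnit (Polynomial.C (C b : MvPolynomial (Fin 1) ℝ)) := by
    apply IsUnit.map (Polynomial.C : MvPolynomial (Fin 1) ℝ →+* Polynomial (MvPolynomial (Fin 1) ℝ))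
    exact IsUnit.map (C : ℝ →+* MvPolynomial (Fin 1) ℝ) (isUnit_iff_ne_zero.mpr hb)
  have hdvd2 : e (C b * X 0 - C a * X 1) ∣ e f := by
    rw [hel]
    rw [mul_comm]
    exact (IsUnit.mul_right_dvd hunit).mpr hdvd
  obtain ⟨g, hg⟩ := hdvd2
  refine ⟨e.symm g, ?_⟩
  apply e.injective
  rw [map_mul, hg, AlgEquiv.apply_symm_apply]

lemma lin_ne_zero (a b : ℝ) (h : ¬(a = 0 ∧ b = 0)) :
    (C b * X 0 - C a * X 1 : MvPolynomial (Fin 2) ℝ) ≠ 0 := by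
  intro h0
  have := congrArg (eval ![b, -a]) h0
  simp at this
  apply h
  constructor <;> nlinarith [sq_nonneg a, sq_nonneg b, this]

lemma lin_hom (a b : ℝ) :
    (C b * X 0 - C a * X 1 : MvPolynomial (Fin 2) ℝ).IsHomogeneous 1 :=
  (isHomogeneous_C_mul_X b 0).sub (isHomogeneous_C_mul_X a 1)

lemma linear_factor_of_root (f : MvPolynomial (Fin 2) ℝ) (n : ℕ) (hn : 1 ≤ n)
    (hfh : f.IsHomogeneous n) (a b : ℝ) (hab : ¬(a = 0 ∧ b = 0))
    (hroot : eval ![a, b] f = 0) :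
    ∃ l : MvPolynomial (Fin 2) ℝ, l ≠ 0 ∧ l.IsHomogeneous 1 ∧ l ∣ f := by
  by_cases hb : b ≠ 0
  · exact ⟨C b * X 0 - C a * X 1, lin_ne_zero a b hab, lin_hom a b,
      linear_factor_of_root_b f n hn hfh a b hb hroot⟩
  · push_neg at hb
    have ha : a ≠ 0 := fun ha0 => hab ⟨ha0, hb⟩
    set sw : Fin 2 ≃ Fin 2 := Equiv.swap 0 1 with hsw
    set g := rename sw f with hg
    have hgh : g.IsHomogeneous n := hfh.rename_isHomogeneous
    have hrootg : eval ![b, a] g = 0 := by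
      rw [hg, eval_rename]
      have : ((![b, a] : Fin 2 → ℝ) ∘ sw) = ![a, b] := by
        funext i
        fin_cases i <;> simp [hsw, Equiv.swap_apply_def]
      rw [this, hroot]
    have hdvd : (C a * X 0 - C b * X 1) ∣ g :=
      linear_factor_of_root_b g n hn hgh b a ha hrootg
    obtain ⟨u, hu⟩ := hdvd
    refine ⟨rename sw (C a * X 0 - C b * X 1), ?_, ?_, ?_⟩
    · intro h0
      have : (C a * X 0 - C b * X 1 : MvPolynomial (Fin 2) ℝ) = 0 :=
        rename_injective sw sw.injective (by simpa using h0)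
      exact lin_ne_zero b a (fun hh => hab ⟨hh.2, hh.1⟩) this
    · exact (lin_hom b a).rename_isHomogeneous
    · refine ⟨rename sw u, ?_⟩
      have hff : rename sw g = f := by
        rw [hg, rename_rename]
        have : (sw ∘ sw : Fin 2 → Fin 2) = id := by
          funext i
          simp [hsw]
      
        rw [this]
        simp [rename_id]
      rw [← hff, hu, map_mul]

lemma hess_neg (f : MvPolynomial (Fin 2) ℝ) : Hess (-f) = Hess f := by
  simp only [Hess, map_neg]
  ring

theorem hyperbolic_has_real_linear_factor (f : MvPolynomial (Fin 2) ℝ) (n : ℕ)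
    (hn : 2 ≤ n) (hf : f ≠ 0) (hfh : f.IsHomogeneous n)
    (hhyp : ∀ x y : ℝ, (x, y) ≠ (0, 0) → eval ![x, y] (Hess f) < 0) :
    ∃ l : MvPolynomial (Fin 2) ℝ, l ≠ 0 ∧ l.IsHomogeneous 1 ∧ l ∣ f := by
  have hroot : ∃ a b : ℝ, (a ≠ 0 ∨ b ≠ 0) ∧ eval ![a, b] f = 0 := by
    by_contra h
    push_neg at h
    have h' : ∀ a b : ℝ, (a ≠ 0 ∨ b ≠ 0) → eval ![a, b] f ≠ 0 := h
    have h10 : eval ![1, 0] f ≠ 0 := h' 1 0 (Or.inl one_ne_zero)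
    have hnv : ∀ t : ℝ, eval ![t, 1] f ≠ 0 := fun t => h' t 1 (Or.inr one_ne_zero)
    have hcont : ∀ t : ℝ, ContinuousOn (fun s : ℝ => (Phi f).eval s) (Set.uIcc 0 t) :=
      fun t => (Phi f).continuous.continuousOn
    have hsign : (∀ t : ℝ, 0 < eval ![t, 1] f) ∨ (∀ t : ℝ, eval ![t, 1] f < 0) := by
      rcases lt_or_gt_of_ne (hnv 0) with h0 | h0
      · right
        intro t
        rcases lt_or_gt_of_ne (hnv t) with h1 | h1
        · exact h1
        · exfalso
          have hmem : (0 : ℝ) ∈ Set.uIcc ((Phi f).eval 0) ((Phi f).eval t) := by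
            rw [Set.mem_uIcc]
            left
            exact ⟨by rw [Phi_eval]; exact h0.le, by rw [Phi_eval]; exact h1.le⟩
          obtain ⟨x, _, hx⟩ := intermediate_value_uIcc (hcont t) hmem
          exact hnv x (by rw [← Phi_eval]; exact hx)
      · left
        intro t
        rcases lt_or_gt_of_ne (hnv t) with h1 | h1
        · exfalso
          have hmem : (0 : ℝ) ∈ Set.uIcc ((Phi f).eval 0) ((Phi f).eval t) := by
            rw [Set.mem_uIcc]
            right
            exact ⟨by rw [Phi_eval]; exact h1.le, by rw [Phi_eval]; exact h0.le⟩
          obtain ⟨x, _, hx⟩ := intermediate_value_uIcc (hcont t) hmem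
          exact hnv x (by rw [← Phi_eval]; exact hx)
        · exact h1
    rcases hsign with hsp | hsn
    · exact core f n hn hfh hhyp hsp h10
    · refine core (-f) n hn hfh.neg ?_ ?_ ?_
      · intro x y hxy
        rw [hess_neg]
        exact hhyp x y hxy
      · intro t
        rw [map_neg]
        linarith [hsn t]
      · rw [map_neg]
        simpa using h10
  obtain ⟨a, b, hab, hr⟩ := hroot
  exact linear_factor_of_root f n (by omega) hfh a b
    (fun hh => by rcases hab with h | h <;> [exact h hh.1; exact h hh.2]) hr
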